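/- Let U_1, …, U_d be pairwise commuting unitary k×k complex matrices, let P be an orthogonal projection on ℂ^k, and let δ ≥ 0 satisfy ‖[P, U_i]‖ ≤ δ for all i. Let T_i be the compression of U_i to range(P), i.e. the map v ↦ P U_i v on range(P). Then ‖T_i T_j − T_j T_i‖ ≤ 2δ² for all i, j. -/

import Mathlib

/-- The compression of an operator `U` to the range of `P`: the map `v ↦ P (U v)`
on `range P`. -/
noncomputable def compress {E : Type*} [NormedAddCommGroup E] [InnerProductSpace ℂ E]
    (P U : E →L[ℂ] E) : (LinearMap.range (P : E →ₗ[ℂ] E)) →L[ℂ] (LinearMap.range (P : E →ₗ[ℂ] E)) :=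
  ((P ∘L U) ∘L (LinearMap.range (P : E →ₗ[ℂ] E)).subtypeL).codRestrict (LinearMap.range (P : E →ₗ[ℂ] E))
    (fun v => LinearMap.mem_range.mpr ⟨U v, rfl⟩)

theorem stmt3 {k d : ℕ} (hk : 1 ≤ k)
    (E : Type*) [NormedAddCommGroup E] [InnerProductSpace ℂ E] [FiniteDimensional ℂ E]
    (hdim : Module.finrank ℂ E = k)
    (U : Fin d → (E →L[ℂ] E)) (hU : ∀ i, U i ∈ unitary (E →L[ℂ] E))
    (hUcomm : ∀ i j, U i * U j = U j * U i)
    (P : E →L[ℂ] E) (hPsa : IsSelfAdjoint P) (hPproj : P * P = P)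
    (δ : ℝ) (hδ0 : 0 ≤ δ)
    (hPU : ∀ i, ‖P * U i - U i * P‖ ≤ δ) :
    ∀ i j, ‖compress P (U i) * compress P (U j)
        - compress P (U j) * compress P (U i)‖ ≤ 2 * δ ^ 2 := by
  intro i j
  set A := U i with hA
  set B := U j with hB
  have hCn : ‖P * A - A * P‖ ≤ δ := hPU i
  have hDn : ‖P * B - B * P‖ ≤ δ := hPU j
  have hPn : ‖P‖ ≤ 1 := by
    have h := CStarRing.norm_star_mul_self (x := P)
    rw [hPsa.star_eq, hPproj] at h
    nlinarith [norm_nonneg P]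
  have hcomm : A * B = B * A := hUcomm i j
  have hPP : ∀ X : E →L[ℂ] E, P * (P * X) = P * X := fun X => by rw [← mul_assoc, hPproj]
  have hABP : ∀ X : E →L[ℂ] E, A * (B * X) = B * (A * X) := fun X => by
    rw [← mul_assoc, hcomm, mul_assoc]
  have key : P*A*P*B*P - P*B*P*A*P = (P*A - A*P)*((P*B - B*P)*P) - (P*B - B*P)*((P*A - A*P)*P) := by
    simp only [sub_mul, mul_sub, mul_assoc, hPP, hABP, hPproj, mul_one]
    abel
  have hOpn : ‖P*A*P*B*P - P*B*P*A*P‖ ≤ 2 * δ ^ 2 := by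
    rw [key]
    calc ‖(P*A - A*P)*((P*B - B*P)*P) - (P*B - B*P)*((P*A - A*P)*P)‖
        ≤ ‖(P*A - A*P)*((P*B - B*P)*P)‖ + ‖(P*B - B*P)*((P*A - A*P)*P)‖ := norm_sub_le _ _
    _ ≤ ‖P*A - A*P‖*(‖P*B - B*P‖*‖P‖) + ‖P*B - B*P‖*(‖P*A - A*P‖*‖P‖) := by
        gcongr <;> exact (norm_mul_le _ _).trans (by gcongr; exact norm_mul_le _ _)
    _ ≤ δ*(δ*1) + δ*(δ*1) := by gcongr <;> positivity
    _ = 2 * δ ^ 2 := by ring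
  refine ContinuousLinearMap.opNorm_le_bound _ (by positivity) ?_
  intro v
  have hv : P (v : E) = (v : E) := by
    obtain ⟨w, hw⟩ := v.2
    have := congrFun (congrArg (fun (f : E →L[ℂ] E) => (f : E → E)) hPproj) w
    simp only [ContinuousLinearMap.mul_apply] at this
    rw [← hw]; exact this
  have hval : (((compress P A * compress P B - compress P B * compress P A) v : _) : E)
      = (P*A*P*B*P - P*B*P*A*P) (v : E) := by
    simp only [ContinuousLinearMap.sub_apply, ContinuousLinearMap.mul_apply,
      AddSubgroupClass.coe_sub, compress, ContinuousLinearMap.coe_codRestrict_apply,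
      ContinuousLinearMap.coe_comp', Function.comp_apply, Submodule.coe_subtypeL',
      Submodule.coe_subtype, hv]
  calc ‖(compress P A * compress P B - compress P B * compress P A) v‖
      = ‖(((compress P A * compress P B - compress P B * compress P A) v : _) : E)‖ :=
        (Submodule.norm_coe _).symm
  _ = ‖(P*A*P*B*P - P*B*P*A*P) (v : E)‖ := by rw [hval]
  _ ≤ ‖P*A*P*B*P - P*B*P*A*P‖ * ‖(v : E)‖ := ContinuousLinearMap.le_opNorm _ _
  _ ≤ 2 * δ ^ 2 * ‖v‖ := by rw [Submodule.norm_coe]; gcongr
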